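/- Let t_1,…,t_s be terms over x_1,…,x_n and let T = t_1 + t_2 + ⋯ + t_s, the sum modulo 2 of their multilinear polynomial representations over F₂. Let L ≥ K ≥ 1 be integers and suppose that for every i ∈ [s] with |t_i| > L one has |t_i^+| ≥ K. Then the number of monomials of the multilinear polynomial representation of T that have fewer than K variables is at most s·2^L. -/

import Mathlib

/-- Evaluation of a multilinear monomial (a set of variables) at a point. -/
def evalMono {n : ℕ} (M : Finset (Fin n)) (x : Fin n → Bool) : Bool :=
  decide (∀ i ∈ M, x i = true)

/-- Evaluation at `x` of the multilinear polynomial over `F₂` whose set of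
monomials is `S` (sum modulo 2 of the monomials of `S`). -/
def polyEval {n : ℕ} (S : Finset (Finset (Fin n))) (x : Fin n → Bool) : Bool :=
  decide ((S.filter (fun M => evalMono M x = true)).card % 2 = 1)

/-- `S` is the (unique) multilinear `F₂`-polynomial representation of `f`:
the polynomial with monomial set `S` computes `f` everywhere. -/
def Represents {n : ℕ} (S : Finset (Finset (Fin n))) (f : (Fin n → Bool) → Bool) : Prop :=
  ∀ x, polyEval S x = f x

/-- The term with positive variables `P` and negated variables `N`, evaluated
at `x`. -/
def termEval {n : ℕ} (P N : Finset (Fin n)) (x : Fin n → Bool) : Bool :=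
  decide (∀ i ∈ P, x i = true) && decide (∀ i ∈ N, x i = false)

namespace Stmt14Aux

variable {n : ℕ}

/-- Indicator of a monomial evaluating to true, in `ZMod 2`. -/
def eMono (x : Fin n → Bool) (M : Finset (Fin n)) : ZMod 2 :=
  if evalMono M x = true then 1 else 0

/-- The `ZMod 2` value of the polynomial with monomial set `S` at `x`. -/
def vS (S : Finset (Finset (Fin n))) (x : Fin n → Bool) : ZMod 2 :=
  ∑ M ∈ S, eMono x M

lemma zmod2_eq_of_iff (a b : ZMod 2) (h : a = 1 ↔ b = 1) : a = b := by
  revert h; revert a b; decide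

lemma cast_eq_one_iff (m : ℕ) : (m : ZMod 2) = 1 ↔ m % 2 = 1 := by
  rw [← ZMod.natCast_mod m 2]
  rcases Nat.mod_two_eq_zero_or_one m with h | h <;> rw [h] <;> decide

lemma cast_eq_ite (m : ℕ) : (m : ZMod 2) = if m % 2 = 1 then 1 else 0 := by
  rw [← ZMod.natCast_mod m 2]
  rcases Nat.mod_two_eq_zero_or_one m with h | h <;> rw [h] <;> decide

lemma vS_eq_card (S : Finset (Finset (Fin n))) (x : Fin n → Bool) :
    vS S x = ((S.filter (fun M => evalMono M x = true)).card : ZMod 2) := by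
  simp [vS, eMono, Finset.sum_boole]

lemma polyEval_iff (S : Finset (Finset (Fin n))) (x : Fin n → Bool) :
    polyEval S x = true ↔ vS S x = 1 := by
  rw [vS_eq_card, cast_eq_one_iff, polyEval, decide_eq_true_iff]

lemma vS_symmDiff (S T : Finset (Finset (Fin n))) (x : Fin n → Bool) :
    vS (symmDiff S T) x = vS S x + vS T x := by
  have h1 : ∑ M ∈ S ∪ T, eMono x M + ∑ M ∈ S ∩ T, eMono x M = vS S x + vS T x :=
    Finset.sum_union_inter
  have h2 : ∑ M ∈ (S ∪ T) \ (S ∩ T), eMono x M + ∑ M ∈ S ∩ T, eMono x M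
      = ∑ M ∈ S ∪ T, eMono x M :=
    Finset.sum_sdiff (Finset.inter_subset_union)
  rw [symmDiff_eq_sup_sdiff_inf]
  show  ∑ M ∈ (S ∪ T) \ (S ∩ T), eMono x M = vS S x + vS T x
  generalize ∑ M ∈ (S ∪ T) \ (S ∩ T), eMono x M = a at *
  generalize ∑ M ∈ S ∩ T, eMono x M = b at *
  generalize ∑ M ∈ S ∪ T, eMono x M = c at *
  generalize vS S x = d at *
  generalize vS T x = e at *
  revert h1 h2; revert a b c d e; decide

lemma eq_empty_of_vS_zero (S : Finset (Finset (Fin n))) (h : ∀ x, vS S x = 0) :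
    S = ∅ := by
  by_contra h0
  obtain ⟨M, hM, hmin⟩ : ∃ m ∈ S, ∀ x ∈ S, ¬x < m := by
    obtain ⟨m, hm⟩ := Finset.exists_minimal (Finset.nonempty_of_ne_empty h0)
    exact ⟨m, hm.1, fun x hx hlt => absurd (hm.2 hx hlt.le) hlt.not_ge⟩
  set x : Fin n → Bool := fun i => decide (i ∈ M) with hx
  have key : ∀ M' ∈ S, (evalMono M' x = true ↔ M' = M) := by
    intro M' hM'
    constructor
    · intro he
      have hsub : M' ⊆ M := by
        intro i hi
        have := (decide_eq_true_iff).mp he i hi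
        simp only [hx] at this
        exact of_decide_eq_true this
      by_contra hne
      exact hmin M' hM' (lt_of_le_of_ne hsub hne)
    · rintro rfl
      simp [evalMono, hx]
  have hfil : S.filter (fun M' => evalMono M' x = true) = {M} := by
    ext M'
    simp only [Finset.mem_filter, Finset.mem_singleton]
    constructor
    · rintro ⟨h1, h2⟩; exact (key M' h1).mp h2
    · rintro rfl; exact ⟨hM, (key _ hM).mpr rfl⟩
  have := h x
  rw [vS_eq_card, hfil] at this
  simp at this

/-- Monomial set of the multilinear representation of a term. -/
def rep (P N : Finset (Fin n)) : Finset (Finset (Fin n)) :=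
  N.powerset.image (fun S => P ∪ S)

lemma eMono_eq_prod (x : Fin n → Bool) (M : Finset (Fin n)) :
    eMono x M = ∏ i ∈ M, (if x i = true then (1 : ZMod 2) else 0) := by
  simp [eMono, evalMono, Finset.prod_boole]

lemma vS_rep (P N : Finset (Fin n)) (hd : Disjoint P N) (x : Fin n → Bool) :
    vS (rep P N) x = if termEval P N x = true then 1 else 0 := by
  classical
  have hinj : ∀ S1 ∈ N.powerset, ∀ S2 ∈ N.powerset,
      P ∪ S1 = P ∪ S2 → S1 = S2 := by
    intro S1 h1 S2 h2 he
    rw [Finset.mem_powerset] at h1 h2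
    have d1 : Disjoint P S1 := hd.mono_right h1
    have d2 : Disjoint P S2 := hd.mono_right h2
    have : (P ∪ S1) \ P = (P ∪ S2) \ P := by rw [he]
    rwa [Finset.union_sdiff_cancel_left d1, Finset.union_sdiff_cancel_left d2] at this
  rw [vS, rep, Finset.sum_image hinj]
  have hsplit : ∀ S ∈ N.powerset, eMono x (P ∪ S)
      = eMono x P * eMono x S := by
    intro S hS
    rw [Finset.mem_powerset] at hS
    rw [eMono_eq_prod, eMono_eq_prod, eMono_eq_prod,
      Finset.prod_union (hd.mono_right hS)]
  rw [Finset.sum_congr rfl hsplit, ← Finset.mul_sum]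
  have hps : ∑ S ∈ N.powerset, eMono x S
      = ∏ i ∈ N, ((if x i = true then (1 : ZMod 2) else 0) + 1) := by
    rw [Finset.prod_add]
    refine Finset.sum_congr rfl ?_
    intro S hS
    rw [eMono_eq_prod]
    simp
  rw [hps]
  have : ∀ i ∈ N, ((if x i = true then (1 : ZMod 2) else 0) + 1)
      = if x i = false then 1 else 0 := by
    intro i _
    cases h : x i <;> simp <;> decide
  rw [Finset.prod_congr rfl this, Finset.prod_boole]
  simp only [eMono, evalMono, termEval, Bool.and_eq_true, decide_eq_true_eq]
  by_cases hP : ∀ i ∈ P, x i = true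
  · by_cases hN : ∀ i ∈ N, x i = false
    · rw [if_pos hP, if_pos hN, if_pos ⟨hP, hN⟩, mul_one]
    · rw [if_neg hN, mul_zero]; simp [hN]
  · rw [if_neg hP, zero_mul]; simp [hP]
end Stmt14Aux

open Stmt14Aux in
theorem stmt14 {n s L K : ℕ} (hK : 1 ≤ K) (hLK : K ≤ L)
    (P N : Fin s → Finset (Fin n)) (hdisj : ∀ i, Disjoint (P i) (N i))
    (hterms : ∀ i, L < (P i).card + (N i).card → K ≤ (P i).card)
    (ST : Finset (Finset (Fin n)))
    (hST : ∀ x : Fin n → Bool, polyEval ST x =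
      decide ((Finset.univ.filter
        (fun i : Fin s => termEval (P i) (N i) x = true)).card % 2 = 1)) :
    (ST.filter (fun M => M.card < K)).card ≤ s * 2 ^ L := by
  classical
  set B : Finset (Finset (Fin n)) :=
    Finset.univ.biUnion (fun i => rep (P i) (N i)) with hB
  set RT : Finset (Finset (Fin n)) :=
    B.filter (fun M =>
      (Finset.univ.filter (fun i : Fin s => M ∈ rep (P i) (N i))).card % 2 = 1) with hRT
  -- value of RT
  have hvRT : ∀ x, vS RT x = ∑ i : Fin s, vS (rep (P i) (N i)) x := by
    intro x
    have hsub : ∀ i : Fin s, vS (rep (P i) (N i)) x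
        = ∑ M ∈ B, (if M ∈ rep (P i) (N i) then eMono x M else 0) := by
      intro i
      rw [← Finset.sum_filter]
      congr 1
      have hsubB : rep (P i) (N i) ⊆ B := by
        intro M hM
        rw [hB]
        exact Finset.mem_biUnion.mpr ⟨i, Finset.mem_univ i, hM⟩
      rw [Finset.filter_mem_eq_inter, Finset.inter_eq_right.mpr hsubB]
    rw [Finset.sum_congr rfl (fun i _ => hsub i), Finset.sum_comm]
    have hin : ∀ M ∈ B, ∑ i : Fin s, (if M ∈ rep (P i) (N i) then eMono x M else 0)
        = (if (Finset.univ.filter (fun i : Fin s => M ∈ rep (P i) (N i))).card % 2 = 1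
            then 1 else 0) * eMono x M := by
      intro M _
      have : ∀ i : Fin s, (if M ∈ rep (P i) (N i) then eMono x M else 0)
          = (if M ∈ rep (P i) (N i) then 1 else 0) * eMono x M := by
        intro i; by_cases h : M ∈ rep (P i) (N i) <;> simp [h]
      rw [Finset.sum_congr rfl (fun i _ => this i), ← Finset.sum_mul]
      congr 1
      rw [Finset.sum_boole, cast_eq_ite]
    rw [Finset.sum_congr rfl hin]
    rw [vS, hRT, Finset.sum_filter]
    refine Finset.sum_congr rfl ?_
    intro M _
    by_cases h : (Finset.univ.filter (fun i : Fin s => M ∈ rep (P i) (N i))).card % 2 = 1 <;>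
      simp [h]
  -- ST = RT
  have hSTRT : ST = RT := by
    have hveq : ∀ x, vS ST x = vS RT x := by
      intro x
      have h1 : vS ST x = 1 ↔
          (Finset.univ.filter (fun i : Fin s => termEval (P i) (N i) x = true)).card % 2
            = 1 := by
        rw [← polyEval_iff, hST x, decide_eq_true_iff]
      have h2 : vS RT x =
          ((Finset.univ.filter
            (fun i : Fin s => termEval (P i) (N i) x = true)).card : ZMod 2) := by
        rw [hvRT x,
          Finset.sum_congr rfl (fun i _ => vS_rep (P i) (N i) (hdisj i) x),
          Finset.sum_boole]
      have h3 : vS RT x = 1 ↔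
          (Finset.univ.filter (fun i : Fin s => termEval (P i) (N i) x = true)).card % 2
            = 1 := by rw [h2, cast_eq_one_iff]
      have h4 : vS ST x = 1 ↔ vS RT x = 1 := h1.trans h3.symm
      exact zmod2_eq_of_iff _ _ h4
    have : symmDiff ST RT = ∅ := by
      apply eq_empty_of_vS_zero
      intro x
      rw [vS_symmDiff, hveq x]
      generalize vS RT x = a
      revert a; decide
    have := symmDiff_eq_bot.mp this
    exact this
  -- counting
  rw [hSTRT]
  have hsubset : RT.filter (fun M => M.card < K) ⊆
      Finset.univ.biUnion (fun i : Fin s =>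
        (rep (P i) (N i)).filter (fun M => M.card < K)) := by
    intro M hM
    rw [Finset.mem_filter] at hM
    obtain ⟨hM1, hM2⟩ := hM
    rw [hRT] at hM1
    have hMB : M ∈ B := (Finset.mem_filter.mp hM1).1
    rw [hB] at hMB
    obtain ⟨i, _, hi⟩ := Finset.mem_biUnion.mp hMB
    rw [Finset.mem_biUnion]
    exact ⟨i, Finset.mem_univ i, Finset.mem_filter.mpr ⟨hi, hM2⟩⟩
  calc (RT.filter (fun M => M.card < K)).card
      ≤ (Finset.univ.biUnion (fun i : Fin s =>
          (rep (P i) (N i)).filter (fun M => M.card < K))).card :=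
        Finset.card_le_card hsubset
    _ ≤ ∑ i : Fin s, ((rep (P i) (N i)).filter (fun M => M.card < K)).card :=
        Finset.card_biUnion_le
    _ ≤ ∑ _i : Fin s, 2 ^ L := by
        refine Finset.sum_le_sum ?_
        intro i _
        by_cases hbig : L < (P i).card + (N i).card
        · have hKP : K ≤ (P i).card := hterms i hbig
          have : (rep (P i) (N i)).filter (fun M => M.card < K) = ∅ := by
            rw [Finset.filter_eq_empty_iff]
            intro M hM hlt
            rw [rep, Finset.mem_image] at hM
            obtain ⟨S, _, rfl⟩ := hM
            have : (P i).card ≤ (P i ∪ S).card :=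
              Finset.card_le_card Finset.subset_union_left
            omega
          rw [this]
          simp
        · have hN : (N i).card ≤ L := by omega
          calc ((rep (P i) (N i)).filter (fun M => M.card < K)).card
              ≤ (rep (P i) (N i)).card := Finset.card_filter_le _ _
            _ ≤ (N i).powerset.card := Finset.card_image_le
            _ = 2 ^ (N i).card := Finset.card_powerset _
            _ ≤ 2 ^ L := Nat.pow_le_pow_right (by norm_num) hN
    _ = s * 2 ^ L := by
        rw [Finset.sum_const, Finset.card_univ, Fintype.card_fin, smul_eq_mul]
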